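/- For α ∈ {1,2,3} with (α, β, γ) a cyclic permutation of (1,2,3), the identity I_{γβ}·θ_{γ+1}(x)·θ_{β+1}(x+2η) − I_{βγ}·θ_{β+1}(x)·θ_{γ+1}(x+2η) = (−1)^α · I_{α0}·θ_{α+1}(x)·θ₁(x+2η) holds for all complex x, where I_{ab} = θ_{a+1}(0)·θ_{b+1}(2η). -/

import Mathlib

open Complex

noncomputable def theta1 (τ z : ℂ) : ℂ :=
  ∑' k : ℤ, Complex.exp (Real.pi * Complex.I * τ * (k + 1/2)^2 +
    2 * Real.pi * Complex.I * (z + 1/2) * (k + 1/2))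

noncomputable def theta2 (τ z : ℂ) : ℂ :=
  ∑' k : ℤ, Complex.exp (Real.pi * Complex.I * τ * (k + 1/2)^2 +
    2 * Real.pi * Complex.I * z * (k + 1/2))

noncomputable def theta3 (τ z : ℂ) : ℂ :=
  ∑' k : ℤ, Complex.exp (Real.pi * Complex.I * τ * k^2 +
    2 * Real.pi * Complex.I * z * k)

noncomputable def theta4 (τ z : ℂ) : ℂ :=
  ∑' k : ℤ, Complex.exp (Real.pi * Complex.I * τ * k^2 +
    2 * Real.pi * Complex.I * (z + 1/2) * k)

/-- `th a τ z = θ_a(z|τ)` for `a = 1,2,3,4`. -/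
noncomputable def th : ℕ → ℂ → ℂ → ℂ
  | 1 => theta1
  | 2 => theta2
  | 3 => theta3
  | _ => theta4

namespace ThetaAux

noncomputable def t3 (τ z : ℂ) (k : ℤ) : ℂ :=
  Complex.exp (Real.pi * Complex.I * τ * k^2 + 2 * Real.pi * Complex.I * z * k)

noncomputable def t2 (τ z : ℂ) (k : ℤ) : ℂ :=
  Complex.exp (Real.pi * Complex.I * τ * (k + 1/2)^2 + 2 * Real.pi * Complex.I * z * (k + 1/2))

noncomputable def tA (τ u : ℂ) (n : ℤ) : ℂ :=
  Complex.exp (2 * Real.pi * Complex.I * τ * n^2 + 2 * Real.pi * Complex.I * n * u)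

noncomputable def tB (τ u : ℂ) (n : ℤ) : ℂ :=
  Complex.exp (Real.pi * Complex.I * τ * (2*n+1)^2 / 2 + Real.pi * Complex.I * (2*n+1) * u)

noncomputable def AA (τ u : ℂ) : ℂ := ∑' n : ℤ, tA τ u n
noncomputable def BB (τ u : ℂ) : ℂ := ∑' n : ℤ, tB τ u n

lemma theta3_eq (τ z : ℂ) : theta3 τ z = ∑' k : ℤ, t3 τ z k := rfl
lemma theta2_eq (τ z : ℂ) : theta2 τ z = ∑' k : ℤ, t2 τ z k := rfl

lemma sn_jt {z τ : ℂ} (hτ : 0 < τ.im) :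
    Summable fun n : ℤ => ‖jacobiTheta₂_term n z τ‖ := by
  have h := summable_pow_mul_jacobiTheta₂_term_bound |z.im| hτ 0
  simp only [pow_zero, one_mul] at h
  refine Summable.of_norm_bounded h fun n => ?_
  rw [norm_norm]
  exact norm_jacobiTheta₂_term_le hτ le_rfl le_rfl n

lemma tA_eq (τ u : ℂ) (n : ℤ) : tA τ u n = jacobiTheta₂_term n u (2*τ) := by
  rw [tA, jacobiTheta₂_term]; congr 1; push_cast; ring

lemma tB_eq (τ u : ℂ) (n : ℤ) :
    tB τ u n = jacobiTheta₂_term n (u + τ) (2*τ)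
      * Complex.exp (Real.pi * Complex.I * τ / 2 + Real.pi * Complex.I * u) := by
  rw [tB, jacobiTheta₂_term, ← Complex.exp_add]; congr 1; push_cast; ring

lemma t3_eq (τ z : ℂ) (k : ℤ) : t3 τ z k = jacobiTheta₂_term k z τ := by
  rw [t3, jacobiTheta₂_term]; congr 1; push_cast; ring

lemma t2_eq (τ z : ℂ) (k : ℤ) :
    t2 τ z k = jacobiTheta₂_term k (z + τ/2) τ
      * Complex.exp (Real.pi * Complex.I * τ / 4 + Real.pi * Complex.I * z) := by
  rw [t2, jacobiTheta₂_term, ← Complex.exp_add]; congr 1; push_cast; ring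

lemma im2τ {τ : ℂ} (hτ : 0 < τ.im) : 0 < (2*τ).im := by
  simp only [mul_im, re_ofNat, im_ofNat, zero_mul, add_zero]; linarith

lemma sn_tA {τ : ℂ} (hτ : 0 < τ.im) (u : ℂ) : Summable fun n : ℤ => ‖tA τ u n‖ :=
  (sn_jt (z := u) (im2τ hτ)).congr fun n => by rw [tA_eq]

lemma sn_tB {τ : ℂ} (hτ : 0 < τ.im) (u : ℂ) : Summable fun n : ℤ => ‖tB τ u n‖ := by
  refine ((sn_jt (z := u + τ) (im2τ hτ)).mul_right
    ‖Complex.exp (Real.pi * Complex.I * τ / 2 + Real.pi * Complex.I * u)‖).congr fun n => ?_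
  rw [← norm_mul, ← tB_eq]

lemma sn_t3 {τ : ℂ} (hτ : 0 < τ.im) (z : ℂ) : Summable fun k : ℤ => ‖t3 τ z k‖ :=
  (sn_jt (z := z) hτ).congr fun n => by rw [t3_eq]

lemma sn_t2 {τ : ℂ} (hτ : 0 < τ.im) (z : ℂ) : Summable fun k : ℤ => ‖t2 τ z k‖ := by
  refine ((sn_jt (z := z + τ/2) hτ).mul_right
    ‖Complex.exp (Real.pi * Complex.I * τ / 4 + Real.pi * Complex.I * z)‖).congr fun n => ?_
  rw [← norm_mul, ← t2_eq]

def evenSet : Set (ℤ × ℤ) := {p | (p.1 + p.2) % 2 = 0}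

def evenE : (ℤ × ℤ) ≃ evenSet where
  toFun jk := ⟨(jk.1 + jk.2, jk.1 - jk.2), by
    simp only [evenSet, Set.mem_setOf_eq]; omega⟩
  invFun p := ((p.1.1 + p.1.2)/2, (p.1.1 - p.1.2)/2)
  left_inv jk := by obtain ⟨j, k⟩ := jk; simp only [Prod.mk.injEq]; exact ⟨by omega, by omega⟩
  right_inv p := by
    obtain ⟨⟨m, n⟩, h⟩ := p
    simp only [evenSet, Set.mem_setOf_eq] at h
    apply Subtype.ext
    simp only [Prod.mk.injEq]
    exact ⟨by omega, by omega⟩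

def oddE3 : (ℤ × ℤ) ≃ (evenSetᶜ : Set (ℤ × ℤ)) where
  toFun jk := ⟨(jk.1 + jk.2 + 1, jk.1 - jk.2), by
    simp only [evenSet, Set.mem_compl_iff, Set.mem_setOf_eq]; omega⟩
  invFun p := ((p.1.1 + p.1.2 - 1)/2, (p.1.1 - p.1.2 - 1)/2)
  left_inv jk := by obtain ⟨j, k⟩ := jk; simp only [Prod.mk.injEq]; exact ⟨by omega, by omega⟩
  right_inv p := by
    obtain ⟨⟨m, n⟩, h⟩ := p
    simp only [evenSet, Set.mem_compl_iff, Set.mem_setOf_eq] at h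
    apply Subtype.ext
    simp only [Prod.mk.injEq]
    exact ⟨by omega, by omega⟩

def oddE2 : (ℤ × ℤ) ≃ (evenSetᶜ : Set (ℤ × ℤ)) where
  toFun jk := ⟨(jk.1 + jk.2, jk.1 - jk.2 - 1), by
    simp only [evenSet, Set.mem_compl_iff, Set.mem_setOf_eq]; omega⟩
  invFun p := ((p.1.1 + p.1.2 + 1)/2, (p.1.1 - p.1.2 - 1)/2)
  left_inv jk := by obtain ⟨j, k⟩ := jk; simp only [Prod.mk.injEq]; exact ⟨by omega, by omega⟩
  right_inv p := by
    obtain ⟨⟨m, n⟩, h⟩ := p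
    simp only [evenSet, Set.mem_compl_iff, Set.mem_setOf_eq] at h
    apply Subtype.ext
    simp only [Prod.mk.injEq]
    exact ⟨by omega, by omega⟩

lemma hasSum_piece {s : Set (ℤ × ℤ)} (e : (ℤ × ℤ) ≃ s) {F : ℤ × ℤ → ℂ} {f g : ℤ → ℂ}
    (hf : Summable fun n => ‖f n‖) (hg : Summable fun n => ‖g n‖)
    (h : ∀ j k : ℤ, F ((e (j, k) : s) : ℤ × ℤ) = f j * g k) :
    HasSum (F ∘ ((↑) : s → ℤ × ℤ)) ((∑' n : ℤ, f n) * (∑' n : ℤ, g n)) := by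
  have h1 : HasSum (fun z : ℤ × ℤ => f z.1 * g z.2) ((∑' n : ℤ, f n) * (∑' n : ℤ, g n)) := by
    have h2 := (summable_mul_of_summable_norm hf hg).hasSum
    rwa [← tsum_mul_tsum_of_summable_norm hf hg] at h2
  rw [← e.hasSum_iff]
  have he : ((F ∘ ((↑) : s → ℤ × ℤ)) ∘ e) = fun z : ℤ × ℤ => f z.1 * g z.2 :=
    funext fun z => by obtain ⟨j, k⟩ := z; exact h j k
  rw [he]; exact h1

lemma L33 {τ : ℂ} (hτ : 0 < τ.im) (x y : ℂ) :
    theta3 τ x * theta3 τ y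
      = AA τ (x+y) * AA τ (x-y) + BB τ (x+y) * BB τ (x-y) := by
  have hsx := sn_t3 hτ x
  have hsy := sn_t3 hτ y
  have hEven : HasSum ((fun p : ℤ × ℤ => t3 τ x p.1 * t3 τ y p.2) ∘ ((↑) : evenSet → ℤ × ℤ))
      (AA τ (x+y) * AA τ (x-y)) :=
    hasSum_piece evenE (sn_tA hτ (x+y)) (sn_tA hτ (x-y)) (fun j k => by
      show t3 τ x (j+k) * t3 τ y (j-k) = tA τ (x+y) j * tA τ (x-y) k
      rw [t3, t3, tA, tA, ← Complex.exp_add, ← Complex.exp_add]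
      congr 1; push_cast; ring)
  have hOdd : HasSum ((fun p : ℤ × ℤ => t3 τ x p.1 * t3 τ y p.2) ∘ ((↑) : ↥(evenSetᶜ) → ℤ × ℤ))
      (BB τ (x+y) * BB τ (x-y)) :=
    hasSum_piece oddE3 (sn_tB hτ (x+y)) (sn_tB hτ (x-y)) (fun j k => by
      show t3 τ x (j+k+1) * t3 τ y (j-k) = tB τ (x+y) j * tB τ (x-y) k
      rw [t3, t3, tB, tB, ← Complex.exp_add, ← Complex.exp_add]
      congr 1; push_cast; ring)
  rw [theta3_eq, theta3_eq, tsum_mul_tsum_of_summable_norm hsx hsy]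
  exact (hEven.add_compl hOdd).tsum_eq

lemma L22 {τ : ℂ} (hτ : 0 < τ.im) (x y : ℂ) :
    theta2 τ x * theta2 τ y
      = BB τ (x+y) * AA τ (x-y) + AA τ (x+y) * BB τ (x-y) := by
  have hsx := sn_t2 hτ x
  have hsy := sn_t2 hτ y
  have hEven : HasSum ((fun p : ℤ × ℤ => t2 τ x p.1 * t2 τ y p.2) ∘ ((↑) : evenSet → ℤ × ℤ))
      (BB τ (x+y) * AA τ (x-y)) :=
    hasSum_piece evenE (sn_tB hτ (x+y)) (sn_tA hτ (x-y)) (fun j k => by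
      show t2 τ x (j+k) * t2 τ y (j-k) = tB τ (x+y) j * tA τ (x-y) k
      rw [t2, t2, tB, tA, ← Complex.exp_add, ← Complex.exp_add]
      congr 1; push_cast; ring)
  have hOdd : HasSum ((fun p : ℤ × ℤ => t2 τ x p.1 * t2 τ y p.2) ∘ ((↑) : ↥(evenSetᶜ) → ℤ × ℤ))
      (AA τ (x+y) * BB τ (x-y)) :=
    hasSum_piece oddE2 (sn_tA hτ (x+y)) (sn_tB hτ (x-y)) (fun j k => by
      show t2 τ x (j+k) * t2 τ y (j-k-1) = tA τ (x+y) j * tB τ (x-y) k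
      rw [t2, t2, tA, tB, ← Complex.exp_add, ← Complex.exp_add]
      congr 1; push_cast; ring)
  rw [theta2_eq, theta2_eq, tsum_mul_tsum_of_summable_norm hsx hsy]
  exact (hEven.add_compl hOdd).tsum_eq

lemma AA_per (τ u : ℂ) : AA τ (u + 1) = AA τ u := by
  refine tsum_congr fun n => ?_
  rw [tA, tA, show 2 * (Real.pi:ℂ) * Complex.I * τ * n^2 + 2 * Real.pi * Complex.I * n * (u+1)
      = (2 * Real.pi * Complex.I * τ * n^2 + 2 * Real.pi * Complex.I * n * u) + n * (2 * Real.pi * Complex.I) from by push_cast; ring,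
    Complex.exp_add, Complex.exp_int_mul_two_pi_mul_I, mul_one]

lemma BB_per (τ u : ℂ) : BB τ (u + 1) = -BB τ u := by
  rw [BB, BB, ← tsum_neg]
  refine tsum_congr fun n => ?_
  rw [tB, tB, show (Real.pi:ℂ) * Complex.I * τ * (2*n+1)^2 / 2 + Real.pi * Complex.I * (2*n+1) * (u+1)
      = (Real.pi * Complex.I * τ * (2*n+1)^2 / 2 + Real.pi * Complex.I * (2*n+1) * u) + (n * (2 * Real.pi * Complex.I) + Real.pi * Complex.I) from by push_cast; ring,
    Complex.exp_add]
  have h2 : Complex.exp ((n:ℂ) * (2 * Real.pi * Complex.I) + Real.pi * Complex.I) = -1 := by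
    rw [Complex.exp_add, Complex.exp_int_mul_two_pi_mul_I, one_mul, Complex.exp_pi_mul_I]
  rw [h2]; ring


lemma theta4_eq (τ z : ℂ) : theta4 τ z = theta3 τ (z + 1/2) := rfl
lemma theta1_eq (τ z : ℂ) : theta1 τ z = theta2 τ (z + 1/2) := rfl

lemma L44 {τ : ℂ} (hτ : 0 < τ.im) (x y : ℂ) :
    theta4 τ x * theta4 τ y
      = AA τ (x+y) * AA τ (x-y) - BB τ (x+y) * BB τ (x-y) := by
  rw [theta4_eq, theta4_eq, L33 hτ,
    show x + 1/2 + (y + 1/2) = (x+y) + 1 from by ring,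
    show x + 1/2 - (y + 1/2) = x - y from by ring, AA_per, BB_per]
  ring

lemma L11 {τ : ℂ} (hτ : 0 < τ.im) (x y : ℂ) :
    theta1 τ x * theta1 τ y
      = AA τ (x+y) * BB τ (x-y) - BB τ (x+y) * AA τ (x-y) := by
  rw [theta1_eq, theta1_eq, L22 hτ,
    show x + 1/2 + (y + 1/2) = (x+y) + 1 from by ring,
    show x + 1/2 - (y + 1/2) = x - y from by ring, AA_per, BB_per]
  ring

lemma th_1 : th 1 = theta1 := rfl
lemma th_2 : th 2 = theta2 := rfl
lemma th_3 : th 3 = theta3 := rfl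
lemma th_4 : th 4 = theta4 := rfl

end ThetaAux

open ThetaAux in

theorem I_theta_identity (τ : ℂ) (hτ : 0 < τ.im) (η : ℂ) (α β γ : ℕ)
    (hcyc : (α, β, γ) = (1, 2, 3) ∨ (α, β, γ) = (2, 3, 1) ∨ (α, β, γ) = (3, 1, 2))
    (x : ℂ) (I : ℕ → ℕ → ℂ) (hI : ∀ a b, I a b = th (a+1) τ 0 * th (b+1) τ (2*η)) :
    I γ β * th (γ+1) τ x * th (β+1) τ (x + 2*η)
      - I β γ * th (β+1) τ x * th (γ+1) τ (x + 2*η) =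
    (-1 : ℂ)^α * I α 0 * th (α+1) τ x * theta1 τ (x + 2*η) := by
  have h3a : theta3 τ x * theta3 τ 0 = AA τ x * AA τ x + BB τ x * BB τ x := by
    simpa using L33 hτ x 0
  have h4a : theta4 τ x * theta4 τ 0 = AA τ x * AA τ x - BB τ x * BB τ x := by
    simpa using L44 hτ x 0
  have h2a : theta2 τ x * theta2 τ 0 = BB τ x * AA τ x + AA τ x * BB τ x := by
    simpa using L22 hτ x 0
  have h3b : theta3 τ (x+2*η) * theta3 τ (2*η)
      = AA τ (x+4*η) * AA τ x + BB τ (x+4*η) * BB τ x := by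
    have h := L33 hτ (x+2*η) (2*η)
    rwa [show x+2*η+2*η = x+4*η from by ring, show x+2*η-2*η = x from by ring] at h
  have h4b : theta4 τ (x+2*η) * theta4 τ (2*η)
      = AA τ (x+4*η) * AA τ x - BB τ (x+4*η) * BB τ x := by
    have h := L44 hτ (x+2*η) (2*η)
    rwa [show x+2*η+2*η = x+4*η from by ring, show x+2*η-2*η = x from by ring] at h
  have h2b : theta2 τ (x+2*η) * theta2 τ (2*η)
      = BB τ (x+4*η) * AA τ x + AA τ (x+4*η) * BB τ x := by
    have h := L22 hτ (x+2*η) (2*η)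
    rwa [show x+2*η+2*η = x+4*η from by ring, show x+2*η-2*η = x from by ring] at h
  have h1b : theta1 τ (x+2*η) * theta1 τ (2*η)
      = AA τ (x+4*η) * BB τ x - BB τ (x+4*η) * AA τ x := by
    have h := L11 hτ (x+2*η) (2*η)
    rwa [show x+2*η+2*η = x+4*η from by ring, show x+2*η-2*η = x from by ring] at h
  rcases hcyc with h | h | h <;>
    (simp only [Prod.mk.injEq] at h; obtain ⟨ha, hb, hc⟩ := h) <;>
    subst ha <;> subst hb <;> subst hc <;>
    simp only [hI, show (0:ℕ)+1 = 1 from rfl, show (1:ℕ)+1 = 2 from rfl,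
      show (2:ℕ)+1 = 3 from rfl, show (3:ℕ)+1 = 4 from rfl, th_1, th_2, th_3, th_4]
  · linear_combination (theta3 τ (x+2*η) * theta3 τ (2*η)) * h4a
      + (AA τ x * AA τ x - BB τ x * BB τ x) * h3b
      - (theta4 τ (x+2*η) * theta4 τ (2*η)) * h3a
      - (AA τ x * AA τ x + BB τ x * BB τ x) * h4b
      + (theta1 τ (x+2*η) * theta1 τ (2*η)) * h2a
      + (BB τ x * AA τ x + AA τ x * BB τ x) * h1b
  · linear_combination (theta4 τ (x+2*η) * theta4 τ (2*η)) * h2a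
      + (BB τ x * AA τ x + AA τ x * BB τ x) * h4b
      - (theta2 τ (x+2*η) * theta2 τ (2*η)) * h4a
      - (AA τ x * AA τ x - BB τ x * BB τ x) * h2b
      - (theta1 τ (x+2*η) * theta1 τ (2*η)) * h3a
      - (AA τ x * AA τ x + BB τ x * BB τ x) * h1b
  · linear_combination (theta2 τ (x+2*η) * theta2 τ (2*η)) * h3a
      + (AA τ x * AA τ x + BB τ x * BB τ x) * h2b
      - (theta3 τ (x+2*η) * theta3 τ (2*η)) * h2a
      - (BB τ x * AA τ x + AA τ x * BB τ x) * h3b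
      + (theta1 τ (x+2*η) * theta1 τ (2*η)) * h4a
      + (AA τ x * AA τ x - BB τ x * BB τ x) * h1b
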